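/- Let C(x) = (1-√(1-4x))/(2x). Then (1/(1-a_1x)^m)·C(a_2x²/(1-a_1x)²)^m = g(x)^m, where g is the unique power series with g(0)=1 satisfying a_2x²g² - (1-a_1x)g + 1 = 0, i.e., g(x) = (1 - a_1x - √((1-a_1x)² - 4a_2x²))/(2a_2x²). -/

import Mathlib

open PowerSeries

/-- Substitution of the power series `g` (with zero constant term) into `f`. -/
noncomputable def pscomp (f g : PowerSeries ℚ) : PowerSeries ℚ :=
  PowerSeries.mk fun N => ∑ n ∈ Finset.range (N + 1), coeff n f * coeff N (g ^ n)

section aux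

variable {w : PowerSeries ℚ} (hw : constantCoeff w = 0)

lemma coeff_w_pow_zero (hw : constantCoeff w = 0) {n N : ℕ} (h : N < n) :
    coeff N (w ^ n) = 0 := by
  have hx : (X : PowerSeries ℚ) ∣ w := PowerSeries.X_dvd_iff.2 hw
  have hxn : (X : PowerSeries ℚ) ^ n ∣ w ^ n := pow_dvd_pow_of_dvd hx n
  exact (PowerSeries.X_pow_dvd_iff.1 hxn) N h

lemma coeff_aeval (hw : constantCoeff w = 0) (P : Polynomial ℚ) (N : ℕ) :
    coeff N (Polynomial.aeval w P) =
      ∑ n ∈ Finset.range (N + 1), P.coeff n * coeff N (w ^ n) := by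
  rw [Polynomial.aeval_eq_sum_range, map_sum]
  have h1 : ∀ M, P.natDegree + 1 ≤ M →
      ∑ i ∈ Finset.range (P.natDegree + 1), coeff N (P.coeff i • w ^ i)
        = ∑ i ∈ Finset.range M, P.coeff i * coeff N (w ^ i) := by
    intro M hM
    rw [Finset.sum_congr rfl (fun i _ => by rw [coeff_smul, smul_eq_mul])]
    apply Finset.sum_subset (Finset.range_subset_range.2 hM)
    intro i _ hi
    have : P.natDegree < i := by simp [Finset.mem_range] at hi; omega
    rw [Polynomial.coeff_eq_zero_of_natDegree_lt this, zero_mul]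
  have h2 : ∀ M, N + 1 ≤ M →
      ∑ i ∈ Finset.range (N + 1), P.coeff i * coeff N (w ^ i)
        = ∑ i ∈ Finset.range M, P.coeff i * coeff N (w ^ i) := by
    intro M hM
    apply Finset.sum_subset (Finset.range_subset_range.2 hM)
    intro i _ hi
    have : N < i := by simp [Finset.mem_range] at hi; omega
    rw [coeff_w_pow_zero hw this, mul_zero]
  rw [h1 (max (P.natDegree + 1) (N + 1)) (le_max_left _ _),
    h2 (max (P.natDegree + 1) (N + 1)) (le_max_right _ _)]

lemma coeff_pscomp_eq_aeval_trunc (hw : constantCoeff w = 0) (f : PowerSeries ℚ)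
    {N M : ℕ} (hNM : N < M) :
    coeff N (pscomp f w) = coeff N (Polynomial.aeval w (trunc M f)) := by
  rw [coeff_aeval hw, pscomp, coeff_mk]
  refine Finset.sum_congr rfl fun n hn => ?_
  rw [coeff_trunc, if_pos (lt_of_lt_of_le (Finset.mem_range.1 hn) hNM)]

lemma pscomp_add (f g : PowerSeries ℚ) : pscomp (f + g) w = pscomp f w + pscomp g w := by
  ext N
  simp [pscomp, add_mul, Finset.sum_add_distrib]

lemma pscomp_neg (f : PowerSeries ℚ) : pscomp (-f) w = -(pscomp f w) := by
  ext N
  simp [pscomp, Finset.sum_neg_distrib]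

lemma pscomp_C (c : ℚ) : pscomp (C c) w = C c := by
  ext N
  rw [pscomp, coeff_mk]
  rw [Finset.sum_eq_single 0]
  · simp [coeff_C]
  · intro n _ hn
    simp [coeff_C, hn]
  · intro h; simp at h

lemma pscomp_one : pscomp 1 w = 1 := by
  have := pscomp_C (w := w) 1
  simpa using this

lemma pscomp_X (hw : constantCoeff w = 0) : pscomp X w = w := by
  ext N
  rw [pscomp, coeff_mk]
  rw [Finset.sum_eq_single 1]
  · simp
  · intro n _ hn
    simp [coeff_X, hn]
  · intro h
    have hN : N = 0 := by simp [Finset.mem_range] at h; omega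
    subst hN
    simp [hw]

lemma pscomp_mul (hw : constantCoeff w = 0) (f g : PowerSeries ℚ) :
    pscomp (f * g) w = pscomp f w * pscomp g w := by
  ext N
  set M := N + 1 with hM
  calc coeff N (pscomp (f * g) w)
      = ∑ n ∈ Finset.range (N + 1), coeff n (f * g) * coeff N (w ^ n) := by
        rw [pscomp, coeff_mk]
    _ = ∑ n ∈ Finset.range (N + 1), (trunc M f * trunc M g).coeff n * coeff N (w ^ n) := by
        refine Finset.sum_congr rfl fun n hn => ?_
        have hn' : n < M := Finset.mem_range.1 hn
        rw [Polynomial.coeff_mul, PowerSeries.coeff_mul]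
        congr 1
        refine Finset.sum_congr rfl fun p hp => ?_
        have hp' := Finset.HasAntidiagonal.mem_antidiagonal.1 hp
        rw [coeff_trunc, coeff_trunc, if_pos (by omega), if_pos (by omega)]
    _ = coeff N (Polynomial.aeval w (trunc M f * trunc M g)) := by
        rw [coeff_aeval hw]
    _ = coeff N (Polynomial.aeval w (trunc M f) * Polynomial.aeval w (trunc M g)) := by
        rw [map_mul]
    _ = coeff N (pscomp f w * pscomp g w) := by
        rw [PowerSeries.coeff_mul, PowerSeries.coeff_mul]
        refine Finset.sum_congr rfl fun p hp => ?_
        have hp' := Finset.HasAntidiagonal.mem_antidiagonal.1 hp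
        rw [← coeff_pscomp_eq_aeval_trunc hw f (by omega),
          ← coeff_pscomp_eq_aeval_trunc hw g (by omega)]

end aux

theorem stmt_14 (a₁ a₂ : ℚ) (Cat g : PowerSeries ℚ)
    (hC0 : constantCoeff Cat = 1) (hC : X * Cat ^ 2 - Cat + 1 = 0)
    (hg0 : constantCoeff g = 1)
    (hg : C a₂ * X ^ 2 * g ^ 2 - (1 - C a₁ * X) * g + 1 = 0)
    (m : ℕ) (hm : 1 ≤ m) :
    ((1 - C a₁ * X)⁻¹) ^ m *
      (pscomp Cat (C a₂ * X ^ 2 * ((1 - C a₁ * X)⁻¹) ^ 2)) ^ m = g ^ m := by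
  set u : PowerSeries ℚ := 1 - C a₁ * X with hu
  have hu0 : constantCoeff u ≠ 0 := by
    simp [hu, map_sub, map_mul]
  have huinv : u⁻¹ * u = 1 := PowerSeries.inv_mul_cancel u hu0
  set w : PowerSeries ℚ := C a₂ * X ^ 2 * (u⁻¹) ^ 2 with hwdef
  have hw : constantCoeff w = 0 := by
    simp [hwdef, map_mul, map_pow]
  set h : PowerSeries ℚ := pscomp Cat w with hh
  have hzero : pscomp (0 : PowerSeries ℚ) w = 0 := by
    ext N; simp [pscomp]
  have e1 : pscomp (X * Cat ^ 2 - Cat + 1) w = w * h ^ 2 - h + 1 := by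
    rw [sub_eq_add_neg, pscomp_add, pscomp_add, pscomp_neg, pscomp_one,
      sq, pscomp_mul hw, pscomp_mul hw, pscomp_X hw, hh]
    ring
  have hrel : w * h ^ 2 - h + 1 = 0 := by
    rw [← e1, hC, hzero]
  have hsq : (u⁻¹) ^ 2 * u ^ 2 = 1 := by
    rw [← mul_pow, huinv, one_pow]
  have hk : w * (u * g) ^ 2 - (u * g) + 1 = 0 := by
    have e2 : w * (u * g) ^ 2 = C a₂ * X ^ 2 * g ^ 2 * ((u⁻¹) ^ 2 * u ^ 2) := by
      rw [hwdef]; ring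
    rw [e2, hsq, mul_one, hu]
    exact hg
  have hfactor : (h - u * g) * (w * (h + u * g) - 1) = 0 := by
    linear_combination hrel - hk
  have hne : w * (h + u * g) - 1 ≠ 0 := by
    intro hcontra
    have := congrArg (constantCoeff) hcontra
    simp [map_sub, map_mul, hw] at this
  have hkey : h = u * g := by
    rcases mul_eq_zero.1 hfactor with h1 | h2
    · exact sub_eq_zero.1 h1
    · exact absurd h2 hne
  rw [← mul_pow, hkey, ← mul_assoc, huinv, one_mul]
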